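/- Let (A_t)_{t≥0} be a sequence of positive reals satisfying A_{t+1} − A_t ≥ √(A_t) for all t ≥ 0, with 0 < A_0 ≤ 1/9. Define t_0 := ⌈log₂ log₃ (1/A_0)⌉ − 1. Then A_{t_0} ≥ 1/9. -/

import Mathlib

/-- If `A` is a positive sequence with `A (t+1) - A t ≥ √(A t)` for all `t`
and `0 < A 0 ≤ 1/9`, then, with `t₀ := ⌈log₂ log₃ (1 / A 0)⌉ - 1` (which is a
nonnegative integer under the assumptions), one has `A t₀ ≥ 1/9`. -/
theorem reaches_one_ninth_by_t0
    (A : ℕ → ℝ) (hApos : ∀ t, 0 < A t)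
    (hgrowth : ∀ t, A (t + 1) - A t ≥ Real.sqrt (A t))
    (hA0 : A 0 ≤ 1 / 9)
    (t₀ : ℕ) (ht₀ : (t₀ : ℤ) = ⌈Real.logb 2 (Real.logb 3 (1 / A 0))⌉ - 1) :
    A t₀ ≥ 1 / 9 := by
  have hA0pos := hApos 0
  -- Step 1: A t ≥ A 0 ^ ((1/2)^t)
  have key : ∀ t, A 0 ^ ((1/2:ℝ)^t) ≤ A t := by
    intro t
    induction t with
    | zero => simp
    | succ t ih =>
      have h1 : Real.sqrt (A t) ≤ A (t+1) := by
        have h := hgrowth t; have h' := (hApos t).le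
        have h'' := Real.sqrt_nonneg (A t)
        nlinarith [Real.sq_sqrt h']
      refine le_trans ?_ h1
      have heq : A 0 ^ ((1/2:ℝ)^(t+1)) = Real.sqrt (A 0 ^ ((1/2:ℝ)^t)) := by
        rw [Real.sqrt_eq_rpow, ← Real.rpow_mul hA0pos.le, ← pow_succ]
      rw [heq]
      exact Real.sqrt_le_sqrt ih
  -- Step 2: bound on B₀ := logb 3 (1/A 0)
  set B : ℝ := Real.logb 3 (1 / A 0) with hB
  have h9 : (9:ℝ) ≤ 1 / A 0 := by
    rw [le_div_iff₀ hA0pos]; linarith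
  have hBpos : 2 ≤ B := by
    have h2 : Real.logb 3 9 = 2 := by
      rw [show (9:ℝ) = 3^(2:ℕ) by norm_num, Real.logb_pow, Real.logb_self_eq_one] <;> norm_num
    calc (2:ℝ) = Real.logb 3 9 := h2.symm
      _ ≤ B := Real.logb_le_logb_of_le (by norm_num : (1:ℝ) < 3) (by norm_num) h9
  have hceil : (⌈Real.logb 2 B⌉ : ℝ) = (t₀:ℝ) + 1 := by
    have : (⌈Real.logb 2 B⌉ : ℤ) = (t₀:ℤ) + 1 := by omega
    exact_mod_cast congrArg (Int.cast : ℤ → ℝ) this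
  have hlog : Real.logb 2 B ≤ (t₀:ℝ) + 1 := by
    calc Real.logb 2 B ≤ (⌈Real.logb 2 B⌉ : ℝ) := Int.le_ceil _
      _ = (t₀:ℝ) + 1 := hceil
  have hBle : B ≤ 2 ^ (t₀ + 1) := by
    have h1 : B = (2:ℝ) ^ Real.logb 2 B := (Real.rpow_logb (by norm_num) (by norm_num) (by linarith)).symm
    calc B = (2:ℝ) ^ Real.logb 2 B := h1
      _ ≤ (2:ℝ) ^ ((t₀:ℝ) + 1) := by
          apply Real.rpow_le_rpow_left_iff (by norm_num : (1:ℝ) < 2) |>.mpr hlog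
      _ = 2 ^ (t₀ + 1) := by
          rw [show ((t₀:ℝ) + 1) = ((t₀ + 1 : ℕ) : ℝ) by push_cast; ring, Real.rpow_natCast]
  -- Step 3: conclude
  have hc : (0:ℝ) < (1/2:ℝ)^t₀ := by positivity
  have hcB : (1/2:ℝ)^t₀ * B ≤ 2 := by
    have h2 : (1/2:ℝ)^t₀ * (2:ℝ)^(t₀+1) = 2 := by
      rw [pow_succ]
      field_simp
      rw [← mul_pow]; norm_num
    calc (1/2:ℝ)^t₀ * B ≤ (1/2:ℝ)^t₀ * 2^(t₀+1) := by
          apply mul_le_mul_of_nonneg_left hBle hc.le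
      _ = 2 := h2
  have hlogA0 : Real.logb 3 (A 0) = -B := by
    rw [hB, one_div, Real.logb_inv, neg_neg]
  have hfin : (1/9:ℝ) ≤ A 0 ^ ((1/2:ℝ)^t₀) := by
    have hA0eq : A 0 = (3:ℝ) ^ Real.logb 3 (A 0) :=
      (Real.rpow_logb (by norm_num) (by norm_num) hA0pos).symm
    have h19 : (1/9:ℝ) = (3:ℝ) ^ (-2:ℝ) := by
      rw [Real.rpow_neg (by norm_num), show ((2:ℝ)) = ((2:ℕ):ℝ) by norm_num,
        Real.rpow_natCast]
      norm_num
    rw [h19]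
    calc (3:ℝ) ^ (-2:ℝ) ≤ (3:ℝ) ^ (Real.logb 3 (A 0) * (1/2:ℝ)^t₀) := by
          apply Real.rpow_le_rpow_left_iff (by norm_num : (1:ℝ) < 3) |>.mpr
          rw [hlogA0]
          nlinarith
      _ = A 0 ^ ((1/2:ℝ)^t₀) := by
          rw [Real.rpow_mul (by norm_num : (0:ℝ) ≤ 3), ← hA0eq]
  exact le_trans hfin (key t₀)
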